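/- arXiv:1512.06012 — 2 statements merged into one kernel-verified Lean document; each statement's English description precedes it below -/
import Mathlib

section
/- For every natural number k ≥ 1 and every real T ≥ 1, the sum over integers n with |n| < T of (T² - n²)^(k/2) equals 2 T^(k+1) ∫_0^1 (1-t²)^(k/2) dt + O_k(T^(k/2)), where the implied constant depends only on k. -/
open Real intervalIntegral MeasureTheory

noncomputable def Aop (g : ℝ → ℝ) : ℝ → ℝ := fun x => ∫ u in (x - 1/2)..(x + 1/2), g u
noncomputable def Dop (g : ℝ → ℝ) : ℝ → ℝ := fun x => g x - Aop g x
noncomputable def prim (g : ℝ → ℝ) : ℝ → ℝ := fun y => ∫ u in (0:ℝ)..y, g u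



lemma mem_window {c y : ℝ} (hy : y ∈ Set.uIoc (c - 1/2) (c + 1/2)) : |y - c| ≤ 1/2 := by
  rw [Set.uIoc_of_le (by linarith)] at hy
  rw [abs_le]; constructor <;> [linarith [hy.1]; linarith [hy.2]]

lemma Dop_triv {g : ℝ → ℝ} {c B : ℝ}
    (hg : IntervalIntegrable g volume (c - 1/2) (c + 1/2))
    (hbd : ∀ y, |y - c| ≤ 1/2 → |g y| ≤ B) : |Dop g c| ≤ 2 * B := by
  have h1 : |g c| ≤ B := hbd c (by simp)
  have h2 : |Aop g c| ≤ B := by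
    have := intervalIntegral.norm_integral_le_of_norm_le_const (C := B) (f := g)
      (a := c - 1/2) (b := c + 1/2) (fun x hx => hbd x (mem_window hx))
    rw [Real.norm_eq_abs] at this
    calc |Aop g c| ≤ B * |c + 1/2 - (c - 1/2)| := this
    _ = B := by norm_num
  have := abs_add_le (g c) (-(Aop g c))
  simp only [abs_neg] at this
  calc |Dop g c| = |g c + -(Aop g c)| := by rw [Dop, sub_eq_add_neg]
  _ ≤ |g c| + |Aop g c| := this
  _ ≤ 2 * B := by linarith

lemma Dop_sq {g g1 g2 : ℝ → ℝ} {c M : ℝ} (hM : 0 ≤ M)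
    (h : ∀ x ∈ Set.Icc (c - 1/2) (c + 1/2),
      HasDerivAt g (g1 x) x ∧ HasDerivAt g1 (g2 x) x ∧ |g2 x| ≤ M) :
    |Dop g c| ≤ M := by
  have hle : c - 1/2 ≤ c + 1/2 := by linarith
  have huIcc : Set.uIcc (c - 1/2) (c + 1/2) = Set.Icc (c - 1/2) (c + 1/2) := Set.uIcc_of_le hle
  have hcmem : c ∈ Set.Icc (c - 1/2) (c + 1/2) := by constructor <;> linarith
  have hconv : Convex ℝ (Set.Icc (c - 1/2) (c + 1/2)) := convex_Icc _ _
  -- MVT for g1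
  have hg1lip : ∀ u ∈ Set.Icc (c - 1/2) (c + 1/2), |g1 u - g1 c| ≤ M * |u - c| := by
    intro u hu
    have := hconv.norm_image_sub_le_of_norm_hasDerivWithin_le
      (f := g1) (f' := g2) (C := M)
      (fun x hx => ((h x hx).2.1).hasDerivWithinAt)
      (fun x hx => (h x hx).2.2) hcmem hu
    simpa [Real.norm_eq_abs] using this
  -- second layer
  set h0 : ℝ → ℝ := fun u => g u - g c - g1 c * (u - c) with hh0
  have hh0d : ∀ u ∈ Set.Icc (c - 1/2) (c + 1/2), HasDerivWithinAt h0 (g1 u - g1 c) (Set.Icc (c - 1/2) (c + 1/2)) u := by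
    intro u hu
    have : HasDerivAt h0 (g1 u - g1 c) u := by
      have h1 := (h u hu).1
      have h2 : HasDerivAt (fun u : ℝ => g c + g1 c * (u - c)) (g1 c) u := by
        have : HasDerivAt (fun u : ℝ => u - c) 1 u := (hasDerivAt_id u).sub_const c
        simpa using ((this.const_mul (g1 c)).const_add (g c))
      have := h1.sub h2
      simpa [hh0, sub_sub, Pi.sub_def] using this
    exact this.hasDerivWithinAt
  have hh0bd : ∀ u ∈ Set.Icc (c - 1/2) (c + 1/2), |h0 u| ≤ M / 4 := by
    intro u hu
    have hd : ∀ x ∈ Set.Icc (c - 1/2) (c + 1/2), ‖g1 x - g1 c‖ ≤ M * (1/2) := by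
      intro x hx
      have h1 := hg1lip x hx
      have h2 : |x - c| ≤ 1/2 := by
        rw [abs_le]; constructor <;> [linarith [hx.1]; linarith [hx.2]]
      calc ‖g1 x - g1 c‖ ≤ M * |x - c| := h1
      _ ≤ M * (1/2) := by nlinarith
    have := hconv.norm_image_sub_le_of_norm_hasDerivWithin_le hh0d hd hcmem hu
    have h0c : h0 c = 0 := by simp [hh0]
    rw [h0c, sub_zero] at this
    have : |h0 u| ≤ M * (1/2) * |u - c| := by simpa [Real.norm_eq_abs] using this
    have h2 : |u - c| ≤ 1/2 := by
      rw [abs_le]; constructor <;> [linarith [hu.1]; linarith [hu.2]]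
    nlinarith [abs_nonneg (h0 u), abs_nonneg (u - c)]
  -- continuity / integrability
  have hgcont : ContinuousOn g (Set.Icc (c - 1/2) (c + 1/2)) :=
    fun x hx => ((h x hx).1.continuousAt).continuousWithinAt
  have hgint : IntervalIntegrable g volume (c - 1/2) (c + 1/2) :=
    (huIcc ▸ hgcont).intervalIntegrable
  -- Dop g c = - ∫ h0
  have key : Dop g c = -∫ u in (c - 1/2)..(c + 1/2), h0 u := by
    have e1 : (∫ u in (c - 1/2)..(c + 1/2), h0 u)
        = (∫ u in (c - 1/2)..(c + 1/2), g u) - (∫ u in (c - 1/2)..(c + 1/2), (g c + g1 c * (u - c))) := by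
      rw [← intervalIntegral.integral_sub hgint]
      · apply intervalIntegral.integral_congr
        intro u _; simp [hh0]; ring
      · apply ContinuousOn.intervalIntegrable
        exact (continuousOn_const.add (continuousOn_const.mul ((continuousOn_id).sub continuousOn_const)))
    have e2 : (∫ u in (c - 1/2)..(c + 1/2), (g c + g1 c * (u - c))) = g c := by
      rw [intervalIntegral.integral_add intervalIntegrable_const]
      · rw [intervalIntegral.integral_const_mul]
        have : (∫ u in (c - 1/2)..(c + 1/2), (u - c)) = 0 := by
          rw [intervalIntegral.integral_comp_sub_right (fun u => u) c]
          rw [integral_id]; norm_num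
        rw [this, intervalIntegral.integral_const]
        norm_num
      · apply Continuous.intervalIntegrable
        exact continuous_const.mul (continuous_id.sub continuous_const)
    rw [e1, e2, Dop, Aop]; ring
  rw [key, abs_neg]
  have := intervalIntegral.norm_integral_le_of_norm_le_const (C := M/4) (f := h0)
    (a := c - 1/2) (b := c + 1/2) (fun x hx => by
      have hx' : x ∈ Set.Icc (c - 1/2) (c + 1/2) := by
        rw [Set.uIoc_of_le hle] at hx; exact ⟨le_of_lt hx.1, hx.2⟩
      simpa [Real.norm_eq_abs] using hh0bd x hx')
  rw [Real.norm_eq_abs] at this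
  calc |∫ u in (c - 1/2)..(c + 1/2), h0 u| ≤ M/4 * |c + 1/2 - (c - 1/2)| := this
  _ ≤ M := by rw [show c + 1/2 - (c - 1/2) = 1 by ring]; rw [abs_one]; linarith

-- commute: derivative of Dop g
lemma Dop_deriv {g g1 : ℝ → ℝ} {c : ℝ}
    (hg : ∀ x ∈ Set.Icc (c - 2) (c + 2), HasDerivAt g (g1 x) x)
    (hg1 : ContinuousOn g1 (Set.Icc (c - 2) (c + 2))) :
    HasDerivAt (Dop g) (Dop g1 c) c := by
  have hgc : ContinuousOn g (Set.Icc (c - 2) (c + 2)) :=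
    fun x hx => (hg x hx).continuousAt.continuousWithinAt
  have hgo : ContinuousOn g (Set.Ioo (c - 2) (c + 2)) := hgc.mono Set.Ioo_subset_Icc_self
  set G : ℝ → ℝ := fun y => ∫ u in (c - 2)..y, g u with hGdef
  have hint : ∀ y ∈ Set.Icc (c - 2) (c + 2), IntervalIntegrable g volume (c - 2) y := by
    intro y hy
    apply ContinuousOn.intervalIntegrable
    apply hgc.mono
    rw [Set.uIcc_of_le hy.1]
    exact Set.Icc_subset_Icc le_rfl hy.2
  have hGd : ∀ y ∈ Set.Ioo (c - 2) (c + 2), HasDerivAt G (g y) y := by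
    intro y hy
    exact intervalIntegral.integral_hasDerivAt_right (hint y (Set.Ioo_subset_Icc_self hy))
      (hgo.stronglyMeasurableAtFilter isOpen_Ioo y hy)
      (hgo.continuousAt (Ioo_mem_nhds hy.1 hy.2))
  have hloc : ∀ y ∈ Set.Ioo (c - 1) (c + 1), Aop g y = G (y + 1/2) - G (y - 1/2) := by
    intro y hy
    have h2 : IntervalIntegrable g volume (c-2) (y + 1/2) :=
      hint _ (by constructor <;> [linarith [hy.1]; linarith [hy.2]])
    have h1 : IntervalIntegrable g volume (c-2) (y - 1/2) :=
      hint _ (by constructor <;> [linarith [hy.1]; linarith [hy.2]])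
    rw [hGdef]
    exact (intervalIntegral.integral_interval_sub_left h2 h1).symm
  have hA : HasDerivAt (Aop g) (g (c + 1/2) - g (c - 1/2)) c := by
    have d1 : HasDerivAt (fun y => G (y + 1/2)) (g (c + 1/2)) c := by
      have hh := (hGd (c + 1/2) (by constructor <;> linarith)).comp c
        ((hasDerivAt_id c).add_const (1/2))
      simpa [Function.comp_def] using hh
    have d2 : HasDerivAt (fun y => G (y - 1/2)) (g (c - 1/2)) c := by
      have hh := (hGd (c - 1/2) (by constructor <;> linarith)).comp c
        ((hasDerivAt_id c).sub_const (1/2))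
      simpa [Function.comp_def] using hh
    have := d1.sub d2
    apply this.congr_of_eventuallyEq
    have hmem : Set.Ioo (c - 1) (c + 1) ∈ nhds c := Ioo_mem_nhds (by linarith) (by linarith)
    exact Filter.eventuallyEq_of_mem hmem hloc
  have hDg1 : Dop g1 c = g1 c - (g (c + 1/2) - g (c - 1/2)) := by
    have e : (∫ u in (c - 1/2)..(c + 1/2), g1 u) = g (c + 1/2) - g (c - 1/2) := by
      apply intervalIntegral.integral_eq_sub_of_hasDerivAt
      · intro t ht
        rw [Set.uIcc_of_le (by linarith)] at ht
        exact hg t ⟨by linarith [ht.1], by linarith [ht.2]⟩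
      · apply ContinuousOn.intervalIntegrable
        apply hg1.mono
        rw [Set.uIcc_of_le (by linarith)]
        exact Set.Icc_subset_Icc (by linarith) (by linarith)
    rw [Dop, Aop, e]
  rw [hDg1]
  exact (hg c (by constructor <;> linarith)).sub hA

-- continuity of Aop
lemma Aop_continuous {g : ℝ → ℝ} (hg : Continuous g) : Continuous (Aop g) := by
  have hprim : Continuous (fun y => ∫ u in (0:ℝ)..y, g u) := by
    rw [continuous_iff_continuousAt]
    intro y
    exact (intervalIntegral.integral_hasDerivAt_right (hg.intervalIntegrable _ _)
      (hg.continuousOn.stronglyMeasurableAtFilter isOpen_univ y (Set.mem_univ y))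
      hg.continuousAt).continuousAt
  have : Aop g = fun x => (∫ u in (0:ℝ)..(x + 1/2), g u) - ∫ u in (0:ℝ)..(x - 1/2), g u := by
    funext x
    rw [Aop]
    exact (intervalIntegral.integral_interval_sub_left (hg.intervalIntegrable _ _)
      (hg.intervalIntegrable _ _)).symm
  rw [this]
  exact (hprim.comp (continuous_id.add continuous_const)).sub
    (hprim.comp (continuous_id.sub continuous_const))

lemma Dop_continuous {g : ℝ → ℝ} (hg : Continuous g) : Continuous (Dop g) :=
  hg.sub (Aop_continuous hg)

lemma Dop_iter_continuous {g : ℝ → ℝ} (hg : Continuous g) (j : ℕ) : Continuous (Dop^[j] g) := by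
  induction j with
  | zero => simpa using hg
  | succ j ih => rw [Function.iterate_succ_apply']; exact Dop_continuous ih

-- support
lemma Dop_zero {g : ℝ → ℝ} {R x : ℝ} (hg : ∀ y, R ≤ |y| → g y = 0) (hx : R + 1/2 ≤ |x|) :
    Dop g x = 0 := by
  have h0 : ∀ y ∈ Set.uIcc (x - 1/2) (x + 1/2), g y = (fun _ => (0:ℝ)) y := by
    intro y hy
    rw [Set.uIcc_of_le (by linarith)] at hy
    apply hg
    rcases le_or_gt 0 x with hx0 | hx0
    · rw [abs_of_nonneg hx0] at hx
      have : R ≤ y := by linarith [hy.1]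
      calc R ≤ y := this
      _ ≤ |y| := le_abs_self y
    · rw [abs_of_neg hx0] at hx
      have : y ≤ -R := by linarith [hy.2]
      calc R ≤ -y := by linarith
      _ ≤ |y| := neg_le_abs y
  have hgx : g x = 0 := hg x (by linarith)
  rw [Dop, Aop, intervalIntegral.integral_congr h0, hgx]
  simp

lemma Dop_iter_zero : ∀ (j : ℕ) (g : ℝ → ℝ) (R : ℝ), (∀ y, R ≤ |y| → g y = 0) →
    ∀ x, R + j ≤ |x| → Dop^[j] g x = 0 := by
  intro j
  induction j with
  | zero => intro g R hg x hx; simpa using hg x (by simpa using hx)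
  | succ j ih =>
    intro g R hg x hx
    rw [Function.iterate_succ_apply]
    apply ih (Dop g) (R + 1/2) (fun y hy => Dop_zero hg hy)
    push_cast at hx ⊢
    linarith

lemma abs_window {y z r : ℝ} (h1 : y - r ≤ z) (h2 : z ≤ y + r) : |z| ≤ |y| + r := by
  rw [abs_le]
  constructor
  · have := neg_abs_le y; linarith
  · have := le_abs_self y; linarith

-- main iterate bound
lemma Dop_iter_bound : ∀ (j : ℕ) (a : ℝ) (φ : ℕ → ℝ → ℝ),
    (∀ i y, |y| < a → HasDerivAt (φ i) (φ (i+1) y) y) →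
    ∀ (i : ℕ) (x M : ℝ), 0 ≤ M → |x| + 2*j + 2 ≤ a →
    (∀ y, |y - x| ≤ j/2 → |φ (i + 2*j) y| ≤ M) →
    |(Dop^[j] (φ i)) x| ≤ M := by
  intro j
  induction j with
  | zero =>
    intro a φ hφ i x M hM hmar hw
    simpa using hw x (by norm_num)
  | succ j ih =>
    intro a φ hφ i x M hM hmar hw
    push_cast at hmar
    rw [Function.iterate_succ_apply]
    have hψ : ∀ i' y, |y| < a - 2 →
        HasDerivAt ((fun i'' => Dop (φ i'')) i') ((fun i'' => Dop (φ i'')) (i'+1) y) y := by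
      intro i' y hy
      have hdom : ∀ z, z ∈ Set.Icc (y - 2) (y + 2) → |z| < a := by
        intro z hz
        have := abs_window (r := 2) hz.1 hz.2
        linarith
      exact Dop_deriv (fun z hz => hφ i' z (hdom z hz))
        (fun z hz => (hφ (i'+1) z (hdom z hz)).continuousAt.continuousWithinAt)
    have hwin : ∀ y, |y - x| ≤ (j:ℝ)/2 → |(fun i'' => Dop (φ i'')) (i + 2*j) y| ≤ M := by
      intro y hy
      apply Dop_sq hM
      intro z hz
      have hz1 : |z - y| ≤ 1/2 := by
        rw [abs_le]; constructor <;> [linarith [hz.1]; linarith [hz.2]]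
      have hzx : |z - x| ≤ ((j:ℝ)+1)/2 := by
        calc |z - x| ≤ |z - y| + |y - x| := abs_sub_le z y x
        _ ≤ 1/2 + (j:ℝ)/2 := by linarith
        _ = ((j:ℝ)+1)/2 := by ring
      have hzabs : |z| < a := by
        have h1 : |z| ≤ |x| + ((j:ℝ)+1)/2 := by
          have := abs_sub_abs_le_abs_sub z x
          linarith
        linarith
      refine ⟨hφ (i + 2*j) z hzabs, ?_, ?_⟩
      · have := hφ (i + 2*j + 1) z hzabs
        simpa using this
      · have : |φ (i + 2*(j+1)) z| ≤ M := hw z (by push_cast; linarith)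
        have hidx : i + 2*(j+1) = i + 2*j + 1 + 1 := by ring
        rwa [hidx] at this
    exact ih (a - 2) (fun i'' => Dop (φ i'')) hψ i x M hM (by push_cast; linarith) hwin

-- trivial iterate bound
lemma Dop_iter_triv : ∀ (j : ℕ) (g : ℝ → ℝ), Continuous g → ∀ (x B : ℝ), 0 ≤ B →
    (∀ y, |y - x| ≤ j/2 → |g y| ≤ B) → |(Dop^[j] g) x| ≤ 2^j * B := by
  intro j
  induction j with
  | zero => intro g hg x B hB hw; simpa using hw x (by norm_num)
  | succ j ih =>
    intro g hg x B hB hw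
    rw [Function.iterate_succ_apply]
    have step : ∀ y, |y - x| ≤ (j:ℝ)/2 → |Dop g y| ≤ 2 * B := by
      intro y hy
      apply Dop_triv (hg.intervalIntegrable _ _)
      intro z hz
      apply hw
      push_cast
      calc |z - x| ≤ |z - y| + |y - x| := abs_sub_le z y x
      _ ≤ 1/2 + (j:ℝ)/2 := by linarith
      _ = ((j:ℝ)+1)/2 := by ring
    have := ih (Dop g) (Dop_continuous hg) x (2*B) (by linarith) (by
      intro y hy
      exact step y hy)
    calc |(Dop^[j] (Dop g)) x| ≤ 2^j * (2*B) := this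
    _ = 2^(j+1) * B := by ring

-- locality
lemma Dop_iter_congr : ∀ (j : ℕ) (g h : ℝ → ℝ) (x : ℝ),
    (∀ y, |y - x| ≤ j/2 → g y = h y) → Dop^[j] g x = Dop^[j] h x := by
  intro j
  induction j with
  | zero => intro g h x he; simpa using he x (by norm_num)
  | succ j ih =>
    intro g h x he
    rw [Function.iterate_succ_apply, Function.iterate_succ_apply]
    apply ih
    intro y hy
    have hone : ∀ z, |z - y| ≤ 1/2 → g z = h z := by
      intro z hz
      apply he
      push_cast
      calc |z - x| ≤ |z - y| + |y - x| := abs_sub_le z y x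
      _ ≤ 1/2 + (j:ℝ)/2 := by linarith
      _ ≤ ((j:ℝ)+1)/2 := by linarith
    rw [Dop, Dop, Aop, Aop, hone y (by norm_num)]
    congr 1
    apply intervalIntegral.integral_congr
    intro z hz
    rw [Set.uIcc_of_le (by linarith)] at hz
    apply hone
    rw [abs_le]; constructor <;> [linarith [hz.1]; linarith [hz.2]]

lemma prim_sub {g : ℝ → ℝ} (hg : Continuous g) (y z : ℝ) :
    prim g z - prim g y = ∫ u in y..z, g u := by
  show (∫ u in (0:ℝ)..z, g u) - (∫ u in (0:ℝ)..y, g u) = _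
  exact (intervalIntegral.integral_interval_sub_left
    (hg.intervalIntegrable (μ := volume) 0 z) (hg.intervalIntegrable (μ := volume) 0 y))

lemma prim_continuous {g : ℝ → ℝ} (hg : Continuous g) : Continuous (prim g) := by
  rw [continuous_iff_continuousAt]
  intro y
  exact (intervalIntegral.integral_hasDerivAt_right (hg.intervalIntegrable _ _)
    (hg.continuousOn.stronglyMeasurableAtFilter isOpen_univ y (Set.mem_univ y))
    hg.continuousAt).continuousAt

lemma Aop_eq_prim {g : ℝ → ℝ} (hg : Continuous g) (x : ℝ) :
    Aop g x = prim g (x + 1/2) - prim g (x - 1/2) := by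
  rw [Aop, prim_sub hg]

lemma sum_window_integrals {g : ℝ → ℝ} (hg : Continuous g) (P : ℕ) :
    ∑ n ∈ Finset.Icc (-(P:ℤ)) (P:ℤ), ∫ u in ((n:ℝ) - 1/2)..((n:ℝ) + 1/2), g u
      = ∫ u in (-(P:ℝ) - 1/2)..((P:ℝ) + 1/2), g u := by
  have key := intervalIntegral.sum_integral_adjacent_intervals
    (a := fun i : ℕ => -(P:ℝ) - 1/2 + i) (n := 2*P+1) (f := g) (μ := volume)
    (fun i _ => hg.intervalIntegrable _ _)
  refine Eq.trans ?_ (key.trans ?_)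
  · apply Finset.sum_nbij' (i := fun n : ℤ => (n + P).toNat) (j := fun i : ℕ => (i:ℤ) - P)
    · intro n hn
      simp only [Finset.mem_Icc] at hn
      simp only [Finset.mem_range]
      omega
    · intro i hi
      simp only [Finset.mem_range] at hi
      simp only [Finset.mem_Icc]
      omega
    · intro n hn
      simp only [Finset.mem_Icc] at hn
      omega
    · intro i hi
      simp only [Finset.mem_range] at hi
      omega
    · intro n hn
      simp only [Finset.mem_Icc] at hn
      have h1 : (((n + (P:ℤ)).toNat : ℕ) : ℝ) = (n:ℝ) + (P:ℝ) := by
        have h2 : ((n + (P:ℤ)).toNat : ℤ) = n + P := Int.toNat_of_nonneg (by omega)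
        have h3 := congrArg (fun z : ℤ => (z:ℝ)) h2
        push_cast at h3
        linarith
      show _ = ∫ x in (-(P:ℝ) - 1/2 + ((n + (P:ℤ)).toNat : ℕ))..(-(P:ℝ) - 1/2 + (((n + (P:ℤ)).toNat : ℕ) + 1 : ℕ)), g x
      congr 1
      · rw [h1]; ring
      · push_cast
        rw [h1]; ring
  · show (∫ x in (-(P:ℝ) - 1/2 + ((0:ℕ):ℝ))..(-(P:ℝ) - 1/2 + ((2*P+1 : ℕ):ℝ)), g x) = _
    congr 1
    · norm_num
    · push_cast; ring

lemma level_identity {g : ℝ → ℝ} (hg : Continuous g) (P : ℕ) :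
    ∑ n ∈ Finset.Icc (-(P:ℤ)) (P:ℤ), g n
      = (∫ u in (-(P:ℝ) - 1/2)..((P:ℝ) + 1/2), g u)
        + ∑ n ∈ Finset.Icc (-(P:ℤ)) (P:ℤ), Dop g n := by
  rw [← sum_window_integrals hg P, ← Finset.sum_add_distrib]
  apply Finset.sum_congr rfl
  intro n _
  show g n = (∫ u in ((n:ℝ) - 1/2)..((n:ℝ) + 1/2), g u) + (g n - Aop g n)
  rw [Aop]
  ring

lemma integral_Dop_zero {g : ℝ → ℝ} (hg : Continuous g) {R L : ℝ} (hR : 0 ≤ R)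
    (hgR : ∀ y, R ≤ |y| → g y = 0) (hRL : R + 2 ≤ L) :
    (∫ u in (-L)..L, Dop g u) = 0 := by
  have hGcont : Continuous (prim g) := prim_continuous hg
  have hconst : ∀ y z : ℝ, R ≤ y → y ≤ z → prim g z = prim g y := by
    intro y z hy hyz
    have h1 := prim_sub hg y z
    have hz : (∫ u in y..z, g u) = 0 := by
      rw [intervalIntegral.integral_congr (g := fun _ => (0:ℝ))]
      · simp
      · intro t ht
        rw [Set.uIcc_of_le hyz] at ht
        exact hgR t (le_trans (le_trans hy ht.1) (le_abs_self t))
    rw [hz] at h1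
    linarith
  have hconstneg : ∀ y z : ℝ, z ≤ y → y ≤ -R → prim g z = prim g y := by
    intro y z hzy hy
    have h1 := prim_sub hg z y
    have hz : (∫ u in z..y, g u) = 0 := by
      rw [intervalIntegral.integral_congr (g := fun _ => (0:ℝ))]
      · simp
      · intro t ht
        rw [Set.uIcc_of_le hzy] at ht
        apply hgR
        have h2 : t ≤ -R := le_trans ht.2 hy
        calc R ≤ -t := by linarith
        _ ≤ |t| := neg_le_abs t
    rw [hz] at h1
    linarith
  have hca : (∫ u in (-L)..L, prim g (u + 1/2)) = ∫ u in (-L+1/2)..(L+1/2), prim g u :=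
    intervalIntegral.integral_comp_add_right (prim g) (1/2)
  have hcs : (∫ u in (-L)..L, prim g (u - 1/2)) = ∫ u in (-L-1/2)..(L-1/2), prim g u :=
    intervalIntegral.integral_comp_sub_right (prim g) (1/2)
  have hsplit : (∫ u in (-L)..L, Aop g u)
      = (∫ u in (-L+1/2)..(L+1/2), prim g u) - (∫ u in (-L-1/2)..(L-1/2), prim g u) := by
    rw [← hca, ← hcs]
    have hint1 : IntervalIntegrable (fun u : ℝ => prim g (u + 1/2)) volume (-L) L :=
      (hGcont.comp (continuous_id.add continuous_const)).intervalIntegrable _ _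
    have hint2 : IntervalIntegrable (fun u : ℝ => prim g (u - 1/2)) volume (-L) L :=
      (hGcont.comp (continuous_id.sub continuous_const)).intervalIntegrable _ _
    rw [← intervalIntegral.integral_sub hint1 hint2]
    exact intervalIntegral.integral_congr (fun u _ => Aop_eq_prim hg u)
  have hmid1 : (∫ u in (-L+1/2)..(L+1/2), prim g u)
      = (∫ u in (-L+1/2)..(L-1/2), prim g u) + (∫ u in (L-1/2)..(L+1/2), prim g u) :=
    (intervalIntegral.integral_add_adjacent_intervals
      (hGcont.intervalIntegrable _ _) (hGcont.intervalIntegrable _ _)).symm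
  have hmid2 : (∫ u in (-L-1/2)..(L-1/2), prim g u)
      = (∫ u in (-L-1/2)..(-L+1/2), prim g u) + (∫ u in (-L+1/2)..(L-1/2), prim g u) :=
    (intervalIntegral.integral_add_adjacent_intervals
      (hGcont.intervalIntegrable _ _) (hGcont.intervalIntegrable _ _)).symm
  have hend1 : (∫ u in (L-1/2)..(L+1/2), prim g u) = prim g R := by
    rw [intervalIntegral.integral_congr (g := fun _ => prim g R)]
    · rw [intervalIntegral.integral_const]
      norm_num
    · intro t ht
      rw [Set.uIcc_of_le (by linarith)] at ht
      exact hconst R t le_rfl (by linarith [ht.1])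
  have hend2 : (∫ u in (-L-1/2)..(-L+1/2), prim g u) = prim g (-R) := by
    rw [intervalIntegral.integral_congr (g := fun _ => prim g (-R))]
    · rw [intervalIntegral.integral_const]
      norm_num
    · intro t ht
      rw [Set.uIcc_of_le (by linarith)] at ht
      exact hconstneg (-R) t (by linarith [ht.2]) le_rfl
  have hgint : (∫ u in (-L)..L, g u) = prim g R - prim g (-R) := by
    have h1 : prim g L = prim g R := hconst R L le_rfl (by linarith)
    have h2 : prim g (-L) = prim g (-R) := hconstneg (-R) (-L) (by linarith) le_rfl
    have h3 := prim_sub hg (-L) L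
    rw [h1, h2] at h3
    linarith
  have hmain : (∫ u in (-L)..L, Dop g u)
      = (∫ u in (-L)..L, g u) - (∫ u in (-L)..L, Aop g u) := by
    rw [← intervalIntegral.integral_sub (hg.intervalIntegrable _ _)
      ((Aop_continuous hg).intervalIntegrable _ _)]
    rfl
  rw [hmain, hsplit, hmid1, hmid2, hend1, hend2, hgint]
  ring

lemma iter_identity {f : ℝ → ℝ} (hf : Continuous f) {R : ℝ} (hR : 0 ≤ R)
    (hfR : ∀ y, R ≤ |y| → f y = 0) (P : ℕ) :
    ∀ m : ℕ, R + m + 3 ≤ (P:ℝ) →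
    ∑ n ∈ Finset.Icc (-(P:ℤ)) (P:ℤ), f n
      = (∫ u in (-(P:ℝ) - 1/2)..((P:ℝ) + 1/2), f u)
        + ∑ n ∈ Finset.Icc (-(P:ℤ)) (P:ℤ), Dop^[m+1] f n := by
  intro m
  induction m with
  | zero =>
    intro _
    simpa using level_identity hf P
  | succ m ih =>
    intro hP
    push_cast at hP
    rw [ih (by linarith)]
    congr 1
    have hlev := level_identity (g := Dop^[m+1] f) (Dop_iter_continuous hf (m+1)) P
    have hzero : (∫ u in (-(P:ℝ) - 1/2)..((P:ℝ) + 1/2), Dop^[m+1] f u) = 0 := by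
      have heq : (∫ u in (-(P:ℝ) - 1/2)..((P:ℝ) + 1/2), Dop^[m+1] f u)
          = ∫ u in (-((P:ℝ) + 1/2))..((P:ℝ) + 1/2), Dop (Dop^[m] f) u := by
        rw [show Dop^[m+1] f = Dop (Dop^[m] f) from Function.iterate_succ_apply' Dop m f]
        congr 1
        ring
      rw [heq]
      apply integral_Dop_zero (g := Dop^[m] f) (Dop_iter_continuous hf m)
        (R := R + m) (by positivity)
      · intro y hy
        exact Dop_iter_zero m f R hfR y (by linarith)
      · linarith
    rw [hlev, hzero, zero_add]
    apply Finset.sum_congr rfl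
    intro n _
    rw [show Dop^[m+1+1] f = Dop (Dop^[m+1] f) from Function.iterate_succ_apply' Dop (m+1) f]

noncomputable def Pfam (κ : ℝ) : ℕ → Polynomial ℝ
  | 0 => 1
  | (i+1) => (1 - Polynomial.X^2) * (Pfam κ i).derivative
      - Polynomial.C (2*(κ - i)) * (Polynomial.X * Pfam κ i)

noncomputable def gam (κ : ℝ) (i : ℕ) (t : ℝ) : ℝ := ((Pfam κ i).eval t) * (1 - t^2) ^ (κ - i)

noncomputable def phifam (κ T : ℝ) (i : ℕ) : ℝ → ℝ := fun x => T ^ (2*κ - i) * gam κ i (x/T)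

lemma gam_zero (κ : ℝ) (t : ℝ) : gam κ 0 t = (1 - t^2) ^ κ := by
  rw [gam]
  show (Polynomial.eval t 1) * _ = _
  push_cast
  simp

lemma gam_deriv {κ : ℝ} {i : ℕ} {t : ℝ} (ht : |t| < 1) :
    HasDerivAt (gam κ i) (gam κ (i+1) t) t := by
  have ht' := abs_lt.mp ht
  have hu : 0 < 1 - t^2 := by nlinarith
  have hq : HasDerivAt (fun s : ℝ => 1 - s^2) (-(2*t)) t := by
    simpa using (hasDerivAt_pow 2 t).const_sub 1
  have hr : HasDerivAt (fun s : ℝ => (1 - s^2) ^ (κ - (i:ℝ)))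
      (-(2*t) * (κ - i) * (1 - t^2) ^ (κ - (i:ℝ) - 1)) t := hq.rpow_const (Or.inl hu.ne')
  have hp : HasDerivAt (fun s => (Pfam κ i).eval s) ((Pfam κ i).derivative.eval t) t :=
    (Pfam κ i).hasDerivAt t
  have hmul := hp.mul hr
  have hsplit : (1 - t^2) ^ (κ - (i:ℝ)) = (1 - t^2) * (1 - t^2) ^ (κ - (i:ℝ) - 1) := by
    have h4 := Real.rpow_add hu 1 (κ - (i:ℝ) - 1)
    rw [Real.rpow_one] at h4
    rw [show (1:ℝ) + (κ - (i:ℝ) - 1) = κ - (i:ℝ) from by ring] at h4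
    exact h4
  have hval : gam κ (i+1) t
      = (Pfam κ i).derivative.eval t * (1 - t^2) ^ (κ - (i:ℝ))
        + (Pfam κ i).eval t * (-(2*t) * (κ - i) * (1 - t^2) ^ (κ - (i:ℝ) - 1)) := by
    show (Pfam κ (i+1)).eval t * (1 - t^2) ^ (κ - ((i+1:ℕ):ℝ)) = _
    have hev : (Pfam κ (i+1)).eval t
        = (1 - t^2) * (Pfam κ i).derivative.eval t - 2*(κ - i) * (t * (Pfam κ i).eval t) := by
      show ((1 - Polynomial.X^2) * (Pfam κ i).derivative
        - Polynomial.C (2*(κ - (i:ℝ))) * (Polynomial.X * Pfam κ i)).eval t = _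
      simp
    rw [hev, hsplit]
    push_cast
    ring
  rw [hval]
  exact hmul

lemma phifam_deriv {κ T : ℝ} (hT : 0 < T) {i : ℕ} {x : ℝ} (hx : |x| < T) :
    HasDerivAt (phifam κ T i) (phifam κ T (i+1) x) x := by
  have ht : |x/T| < 1 := by
    rw [abs_div, abs_of_pos hT, div_lt_one hT]
    exact hx
  have h1 : HasDerivAt (fun x : ℝ => x / T) (1/T) x := by
    simpa using (hasDerivAt_id x).div_const T
  have h2 : HasDerivAt (fun y : ℝ => gam κ i (y/T)) (gam κ (i+1) (x/T) * (1/T)) x :=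
    by have := (gam_deriv (κ := κ) (i := i) ht).comp x h1; exact this
  have h3 := h2.const_mul (T ^ (2*κ - (i:ℝ)))
  have hval : phifam κ T (i+1) x = T ^ (2*κ - (i:ℝ)) * (gam κ (i+1) (x/T) * (1/T)) := by
    show T ^ (2*κ - ((i+1:ℕ):ℝ)) * gam κ (i+1) (x/T) = _
    push_cast
    rw [show 2*κ - ((i:ℝ)+1) = (2*κ - (i:ℝ)) - 1 from by ring, Real.rpow_sub hT, Real.rpow_one]
    field_simp
  rw [hval]
  exact h3

lemma gam_bound (κ : ℝ) (i : ℕ) : ∃ Cg : ℝ, 0 ≤ Cg ∧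
    ∀ t : ℝ, |t| ≤ 1 → |gam κ i t| ≤ Cg * (1 - t^2) ^ (κ - i) := by
  obtain ⟨C, hC⟩ := (isCompact_Icc (a := (-1:ℝ)) (b := 1)).exists_bound_of_continuousOn
    ((Pfam κ i).continuous.continuousOn)
  refine ⟨max C 0, le_max_right _ _, fun t ht => ?_⟩
  have htm : t ∈ Set.Icc (-1:ℝ) 1 := by
    rw [Set.mem_Icc]; exact abs_le.mp ht
  have ht' := abs_le.mp ht
  have hnn : (0:ℝ) ≤ 1 - t^2 := by nlinarith
  rw [gam, abs_mul, abs_of_nonneg (rpow_nonneg hnn _)]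
  apply mul_le_mul_of_nonneg_right _ (rpow_nonneg hnn _)
  calc |(Pfam κ i).eval t| = ‖Polynomial.eval t (Pfam κ i)‖ := rfl
  _ ≤ C := hC t htm
  _ ≤ max C 0 := le_max_left _ _

lemma phifam_bound {κ T Cg : ℝ} (hT : 1 ≤ T) (hCg : 0 ≤ Cg) {i : ℕ}
    (hgam : ∀ t : ℝ, |t| ≤ 1 → |gam κ i t| ≤ Cg * (1 - t^2) ^ (κ - i))
    (hκi : κ - (i:ℝ) ≤ 0) {y : ℝ} (hy : |y| ≤ T - 1) :
    |phifam κ T i y| ≤ Cg * T ^ κ * (T - |y|) ^ (κ - (i:ℝ)) := by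
  have hT0 : 0 < T := by linarith
  have hyT : |y/T| ≤ 1 := by
    rw [abs_div, abs_of_pos hT0, div_le_one hT0]
    linarith
  have hbase : 0 < (T - |y|)/T := div_pos (by linarith) hT0
  have hbb : (T - |y|)/T ≤ 1 - (y/T)^2 := by
    have h9 : 1 - (y/T)^2 = (T^2 - y^2)/T^2 := by
      field_simp
    rw [h9, div_le_div_iff₀ hT0 (by positivity)]
    nlinarith [sq_abs y, abs_nonneg y, mul_nonneg (mul_nonneg (abs_nonneg y) hT0.le)
      (sub_nonneg.mpr (show |y| ≤ T from by linarith))]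
  have h1 : |phifam κ T i y| = T ^ (2*κ - (i:ℝ)) * |gam κ i (y/T)| := by
    rw [phifam, abs_mul, abs_of_nonneg (rpow_nonneg hT0.le _)]
  have h2 : |gam κ i (y/T)| ≤ Cg * ((T - |y|)/T) ^ (κ - (i:ℝ)) := by
    calc |gam κ i (y/T)| ≤ Cg * (1 - (y/T)^2) ^ (κ - (i:ℝ)) := hgam _ hyT
    _ ≤ Cg * ((T - |y|)/T) ^ (κ - (i:ℝ)) :=
        mul_le_mul_of_nonneg_left (Real.rpow_le_rpow_of_nonpos hbase hbb hκi) hCg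
  have h3 : ((T - |y|)/T) ^ (κ - (i:ℝ)) = (T - |y|) ^ (κ - (i:ℝ)) / T ^ (κ - (i:ℝ)) :=
    Real.div_rpow (by linarith) hT0.le _
  have h4 : |phifam κ T i y| ≤ T ^ (2*κ - (i:ℝ)) * (Cg * ((T - |y|)/T) ^ (κ - (i:ℝ))) := by
    rw [h1]
    exact mul_le_mul_of_nonneg_left h2 (rpow_nonneg hT0.le _)
  have h6 : T ^ (2*κ - (i:ℝ)) / T ^ (κ - (i:ℝ)) = T ^ κ := by
    rw [← Real.rpow_sub hT0, show 2*κ - (i:ℝ) - (κ - (i:ℝ)) = κ from by ring]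
  have h5 : T ^ (2*κ - (i:ℝ)) * (Cg * ((T - |y|)/T) ^ (κ - (i:ℝ)))
      = Cg * T ^ κ * (T - |y|) ^ (κ - (i:ℝ)) := by
    rw [h3, ← h6]
    ring
  rw [h5] at h4
  exact h4

noncomputable def fext (κ T : ℝ) : ℝ → ℝ := fun x => (max (T^2 - x^2) 0) ^ κ

lemma fext_continuous {κ T : ℝ} (hκ : 0 < κ) : Continuous (fext κ T) := by
  apply Continuous.rpow_const
  · exact (continuous_const.sub (continuous_pow 2)).max continuous_const
  · exact fun x => Or.inr hκ.le

lemma fext_nonneg (κ T x : ℝ) : 0 ≤ fext κ T x := rpow_nonneg (le_max_right _ _) _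

lemma fext_zero {κ T : ℝ} (hκ : 0 < κ) (hT : 0 ≤ T) : ∀ y, T ≤ |y| → fext κ T y = 0 := by
  intro y hy
  have h1 : T^2 - y^2 ≤ 0 := by nlinarith [sq_abs y, abs_nonneg y, mul_self_le_mul_self hT hy]
  rw [fext, max_eq_right h1]
  exact Real.zero_rpow hκ.ne'

lemma fext_eq_phifam {κ T : ℝ} (hT0 : 0 < T) {y : ℝ} (hy : |y| ≤ T) :
    fext κ T y = phifam κ T 0 y := by
  have h1 : 0 ≤ T^2 - y^2 := by nlinarith [sq_abs y, abs_nonneg y]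
  have h2 : 0 ≤ 1 - (y/T)^2 := by
    have : (y/T)^2 ≤ 1 := by
      rw [div_pow, div_le_one (by positivity)]
      nlinarith [sq_abs y, abs_nonneg y]
    linarith
  rw [fext, max_eq_left h1, phifam, gam_zero]
  rw [show (2*κ - ((0:ℕ):ℝ)) = 2*κ from by norm_num]
  rw [show T^2 - y^2 = T^2 * (1 - (y/T)^2) from by field_simp]
  rw [Real.mul_rpow (sq_nonneg T) h2]
  congr 1
  rw [show (T:ℝ)^2 = T ^ ((2:ℕ):ℝ) from (Real.rpow_natCast T 2).symm]
  rw [← Real.rpow_mul hT0.le]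
  norm_num

lemma fext_integral {κ T : ℝ} (hκ : 0 < κ) (hT0 : 0 < T) :
    (∫ u in (-T)..T, fext κ T u) = 2 * T ^ (2*κ + 1) * ∫ t in (0:ℝ)..1, (1 - t^2) ^ κ := by
  have hfc : Continuous (fext κ T) := fext_continuous hκ
  -- evenness
  have heven : (fun x => fext κ T (-x)) = fext κ T := by
    funext x
    show (max (T^2 - (-x)^2) 0) ^ κ = (max (T^2 - x^2) 0) ^ κ
    rw [show (-x)^2 = x^2 from by ring]
  have hodd : (∫ u in (-T)..(0:ℝ), fext κ T u) = ∫ u in (0:ℝ)..T, fext κ T u := by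
    have hcn := intervalIntegral.integral_comp_neg (a := (0:ℝ)) (b := T) (fext κ T)
    rw [heven, neg_zero] at hcn
    exact hcn.symm
  have hsplitT : (∫ u in (-T)..T, fext κ T u)
      = (∫ u in (-T)..(0:ℝ), fext κ T u) + ∫ u in (0:ℝ)..T, fext κ T u :=
    (intervalIntegral.integral_add_adjacent_intervals
      (hfc.intervalIntegrable _ _) (hfc.intervalIntegrable _ _)).symm
  -- substitution
  have hsub := intervalIntegral.integral_comp_mul_left (a := (0:ℝ)) (b := 1)
    (fext κ T) (c := T) hT0.ne'
  rw [mul_zero, mul_one, smul_eq_mul] at hsub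
  -- pointwise formula
  have hptw : ∀ t : ℝ, fext κ T (T*t) = T^(2*κ) * (max (1 - t^2) 0) ^ κ := by
    intro t
    show (max (T^2 - (T*t)^2) 0) ^ κ = _
    have hmm : max (T^2 - (T*t)^2) 0 = T^2 * max (1 - t^2) 0 := by
      rcases le_total (1 - t^2) 0 with h | h
      · rw [max_eq_right h, max_eq_right (by nlinarith [mul_nonneg (sq_nonneg T) (by linarith : (0:ℝ) ≤ t^2 - 1)]), mul_zero]
      · rw [max_eq_left h, max_eq_left (by nlinarith [mul_nonneg (sq_nonneg T) h])]
        ring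
    rw [hmm, Real.mul_rpow (sq_nonneg T) (le_max_right _ _)]
    congr 1
    rw [show (T:ℝ)^2 = T ^ ((2:ℕ):ℝ) from (Real.rpow_natCast T 2).symm]
    rw [← Real.rpow_mul hT0.le]
    norm_num
  have hmax : (∫ t in (0:ℝ)..1, (max (1 - t^2) 0) ^ κ) = ∫ t in (0:ℝ)..1, (1 - t^2) ^ κ := by
    apply intervalIntegral.integral_congr
    intro t ht
    rw [Set.uIcc_of_le (by norm_num)] at ht
    have h0 : 0 ≤ 1 - t^2 := by nlinarith [ht.1, ht.2]
    show (max (1 - t^2) 0) ^ κ = (1 - t^2) ^ κ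
    rw [max_eq_left h0]
  have hTT : T * T^(2*κ) = T^(2*κ+1) := by
    rw [Real.rpow_add hT0, Real.rpow_one]
    ring
  calc (∫ u in (-T)..T, fext κ T u) = 2 * ∫ u in (0:ℝ)..T, fext κ T u := by
        rw [hsplitT, hodd]; ring
  _ = 2 * (T * ∫ t in (0:ℝ)..1, fext κ T (T*t)) := by
        rw [hsub]
        field_simp
  _ = 2 * (T * (T^(2*κ) * ∫ t in (0:ℝ)..1, (max (1 - t^2) 0) ^ κ)) := by
        have hci : (∫ t in (0:ℝ)..1, fext κ T (T*t))
            = T^(2*κ) * ∫ t in (0:ℝ)..1, (max (1 - t^2) 0) ^ κ := by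
          rw [← intervalIntegral.integral_const_mul]
          exact intervalIntegral.integral_congr (fun t _ => hptw t)
        rw [hci]
  _ = 2 * T ^ (2*κ + 1) * ∫ t in (0:ℝ)..1, (1 - t^2) ^ κ := by
        rw [hmax, ← hTT]; ring
set_option maxHeartbeats 2000000 in
theorem smoothed_sum_asymptotic :
    ∀ k : ℕ, 1 ≤ k → ∃ C : ℝ, ∀ T : ℝ, 1 ≤ T →
      |(∑' n : ℤ, if |(n:ℝ)| < T then (T^2 - (n:ℝ)^2) ^ ((k:ℝ)/2) else 0)
          - 2 * T ^ ((k:ℝ) + 1) * ∫ t in (0:ℝ)..1, (1 - t^2) ^ ((k:ℝ)/2)|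
        ≤ C * T ^ ((k:ℝ)/2) := by
  intro k hk
  classical
  have htri : ∀ a b : ℝ, |a - b| ≤ |a| + |b| := fun a b => by
    calc |a - b| = |a + (-b)| := by ring_nf
    _ ≤ |a| + |(-b)| := abs_add_le _ _
    _ = |a| + |b| := by rw [abs_neg]
  have hk1 : (1:ℝ) ≤ (k:ℝ) := by exact_mod_cast hk
  set κ : ℝ := (k:ℝ)/2 with hκdef
  have hκpos : 0 < κ := by rw [hκdef]; linarith
  set m : ℕ := k + 1 with hmdef
  have hmcast : (m:ℝ) = (k:ℝ) + 1 := by rw [hmdef]; push_cast; ring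
  have hκm2 : κ - 2*(m:ℝ) ≤ -2 := by rw [hκdef, hmcast]; linarith
  obtain ⟨Cg, hCg0, hCg⟩ := gam_bound κ (2*m)
  have hZsum : Summable (fun s : ℕ => ((s:ℝ)+1) ^ (-2:ℝ)) := by
    have h1 : Summable (fun n : ℕ => (n:ℝ) ^ (-2:ℝ)) :=
      Real.summable_nat_rpow.mpr (by norm_num)
    have h2 := (summable_nat_add_iff 1).mpr h1
    apply h2.congr
    intro n
    push_cast
    ring_nf
  set Z : ℝ := ∑' s : ℕ, ((s:ℝ)+1) ^ (-2:ℝ) with hZdef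
  have hZ0 : 0 ≤ Z := tsum_nonneg (fun s => rpow_nonneg (by positivity) _)
  set T₀ : ℝ := 4*(m:ℝ) + 16 with hT₀def
  have hT₀pos : (0:ℝ) < T₀ := by rw [hT₀def]; positivity
  set Bedge : ℝ := 2^m * (6*(m:ℝ)+6) ^ κ with hBedgedef
  have hBedge0 : 0 ≤ Bedge := by rw [hBedgedef]; positivity
  set Cmain : ℝ := (8*(m:ℝ)+20) * Bedge + 2 * Cg * Z with hCmaindef
  have hCmain0 : 0 ≤ Cmain := by rw [hCmaindef]; positivity
  set C₀ : ℝ := (2*T₀ + 4*(m:ℝ) + 13) * (T₀^2) ^ κ + 2 * T₀ ^ ((k:ℝ)+1) with hC₀def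
  have hC₀0 : 0 ≤ C₀ := by rw [hC₀def]; positivity
  refine ⟨C₀ + Cmain, ?_⟩
  intro T hT
  have hT0 : (0:ℝ) < T := by linarith
  have hTκ : (1:ℝ) ≤ T ^ κ := Real.one_le_rpow hT hκpos.le
  have hTκ0 : (0:ℝ) ≤ T ^ κ := by linarith
  set P : ℕ := ⌈T⌉₊ + 2*m + 5 with hPdef
  have hP1 : T + 2*(m:ℝ) + 5 ≤ (P:ℝ) := by
    have h := Nat.le_ceil T
    rw [hPdef]; push_cast; linarith
  have hP2 : (P:ℝ) ≤ T + 2*(m:ℝ) + 6 := by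
    have h := Nat.ceil_lt_add_one hT0.le
    rw [hPdef]; push_cast; linarith
  have hceil1 : T ≤ ((⌈T⌉₊:ℕ):ℝ) := Nat.le_ceil T
  have hceil2 : ((⌈T⌉₊:ℕ):ℝ) < T + 1 := Nat.ceil_lt_add_one hT0.le
  set S : Finset ℤ := Finset.Icc (-(P:ℤ)) (P:ℤ) with hSdef
  have htsum : (∑' n : ℤ, if |(n:ℝ)| < T then (T^2 - (n:ℝ)^2) ^ κ else 0)
      = ∑ n ∈ S, fext κ T n := by
    rw [tsum_eq_sum (s := S) ?_]
    · apply Finset.sum_congr rfl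
      intro n _
      by_cases hn : |(n:ℝ)| < T
      · rw [if_pos hn, fext,
          max_eq_left (by nlinarith [sq_abs (n:ℝ), pow_le_pow_left₀ (abs_nonneg (n:ℝ)) hn.le 2])]
      · rw [if_neg hn]
        exact (fext_zero hκpos hT0.le n (not_lt.mp hn)).symm
    · intro n hn
      rw [hSdef, Finset.mem_Icc, not_and_or, not_le, not_le] at hn
      have hTn : T ≤ |(n:ℝ)| := by
        rcases hn with h | h
        · have h' : (n:ℝ) < -(P:ℝ) := by exact_mod_cast h
          have := neg_le_abs (n:ℝ)
          linarith
        · have h' : (P:ℝ) < (n:ℝ) := by exact_mod_cast h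
          have := le_abs_self (n:ℝ)
          linarith
      rw [if_neg (not_lt.mpr hTn)]
  have hIone : |∫ t in (0:ℝ)..1, (1 - t^2)^κ| ≤ 1 := by
    have hb := intervalIntegral.norm_integral_le_of_norm_le_const (C := 1)
      (f := fun t : ℝ => (1 - t^2)^κ) (a := 0) (b := 1) ?_
    · rw [Real.norm_eq_abs] at hb
      calc |∫ t in (0:ℝ)..1, (1 - t^2)^κ| ≤ 1 * |1 - 0| := hb
      _ = 1 := by norm_num
    · intro t ht
      rw [Set.uIoc_of_le (by norm_num : (0:ℝ) ≤ 1)] at ht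
      have h1 : 0 ≤ 1 - t^2 := by nlinarith [ht.1.le, ht.2]
      rw [Real.norm_eq_abs, abs_of_nonneg (rpow_nonneg h1 _)]
      exact Real.rpow_le_one h1 (by nlinarith [ht.1.le]) hκpos.le
  rw [htsum]
  rcases lt_or_ge T T₀ with hsmall | hbig
  · -- small T
    have hfb : ∀ n : ℤ, n ∈ S → |fext κ T n| ≤ (T₀^2) ^ κ := by
      intro n _
      rw [abs_of_nonneg (fext_nonneg κ T _)]
      show (max (T^2 - (n:ℝ)^2) 0) ^ κ ≤ (T₀^2) ^ κ
      apply Real.rpow_le_rpow (le_max_right _ _) _ hκpos.le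
      apply max_le _ (by positivity)
      nlinarith [sq_nonneg (n:ℝ)]
    have hScard : (S.card : ℝ) ≤ 2*(P:ℝ)+1 := by
      have h1 : S.card = 2*P+1 := by
        rw [hSdef, Int.card_Icc]
        omega
      rw [h1]; push_cast; linarith
    have hsum1 : |∑ n ∈ S, fext κ T n| ≤ (2*T₀ + 4*(m:ℝ) + 13) * (T₀^2) ^ κ := by
      calc |∑ n ∈ S, fext κ T n| ≤ ∑ n ∈ S, |fext κ T n| := Finset.abs_sum_le_sum_abs _ _
      _ ≤ S.card • ((T₀^2) ^ κ) := Finset.sum_le_card_nsmul _ _ _ hfb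
      _ = (S.card : ℝ) * (T₀^2)^κ := nsmul_eq_mul _ _
      _ ≤ (2*T₀ + 4*(m:ℝ) + 13) * (T₀^2)^κ := by
          apply mul_le_mul_of_nonneg_right _ (rpow_nonneg (by positivity) _)
          linarith
    have h2T : |2 * T ^ ((k:ℝ)+1) * ∫ t in (0:ℝ)..1, (1-t^2)^κ| ≤ 2 * T₀ ^ ((k:ℝ)+1) := by
      rw [abs_mul, abs_mul, abs_two, abs_of_nonneg (rpow_nonneg hT0.le _)]
      have hTle : T ^ ((k:ℝ)+1) ≤ T₀ ^ ((k:ℝ)+1) :=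
        Real.rpow_le_rpow hT0.le hsmall.le (by positivity)
      have h0 : (0:ℝ) ≤ T ^ ((k:ℝ)+1) := rpow_nonneg hT0.le _
      nlinarith [abs_nonneg (∫ t in (0:ℝ)..1, (1-t^2)^κ)]
    calc |(∑ n ∈ S, fext κ T n) - 2 * T ^ ((k:ℝ)+1) * ∫ t in (0:ℝ)..1, (1-t^2)^κ|
        ≤ |∑ n ∈ S, fext κ T n| + |2 * T ^ ((k:ℝ)+1) * ∫ t in (0:ℝ)..1, (1-t^2)^κ| := htri _ _
    _ ≤ C₀ := by rw [hC₀def]; linarith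
    _ = C₀ * 1 := by ring
    _ ≤ C₀ * T ^ κ := mul_le_mul_of_nonneg_left hTκ hC₀0
    _ ≤ (C₀ + Cmain) * T ^ κ := by nlinarith
  · -- big T
    have hTbig : 4*(m:ℝ) + 16 ≤ T := by rw [hT₀def] at hbig; exact hbig
    have hm0' : (0:ℝ) ≤ (m:ℝ) := Nat.cast_nonneg m
    have hfc : Continuous (fext κ T) := fext_continuous hκpos
    have hident := iter_identity hfc hT0.le (fext_zero hκpos hT0.le) P k
      (by push_cast; push_cast at hP1; linarith [hmcast])
    rw [show Dop^[k+1] = Dop^[m] from by rw [hmdef]] at hident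
    -- integral over big interval = integral over [-T,T]
    have hzero1 : (∫ u in (-(P:ℝ)-1/2)..(-T), fext κ T u) = 0 := by
      rw [intervalIntegral.integral_congr (g := fun _ => (0:ℝ))]
      · simp
      · intro u hu
        rw [Set.uIcc_of_le (by linarith)] at hu
        exact fext_zero hκpos hT0.le u (by
          have h2 := hu.2
          calc T ≤ -u := by linarith
          _ ≤ |u| := neg_le_abs u)
    have hzero2 : (∫ u in T..((P:ℝ)+1/2), fext κ T u) = 0 := by
      rw [intervalIntegral.integral_congr (g := fun _ => (0:ℝ))]
      · simp
      · intro u hu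
        rw [Set.uIcc_of_le (by linarith)] at hu
        exact fext_zero hκpos hT0.le u (le_trans hu.1 (le_abs_self u))
    have hintP : (∫ u in (-(P:ℝ)-1/2)..((P:ℝ)+1/2), fext κ T u)
        = ∫ u in (-T)..T, fext κ T u := by
      have e1 : (∫ u in (-(P:ℝ)-1/2)..((P:ℝ)+1/2), fext κ T u)
          = (∫ u in (-(P:ℝ)-1/2)..(-T), fext κ T u)
            + ∫ u in (-T)..((P:ℝ)+1/2), fext κ T u :=
        (intervalIntegral.integral_add_adjacent_intervals
          (hfc.intervalIntegrable _ _) (hfc.intervalIntegrable _ _)).symm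
      have e2 : (∫ u in (-T)..((P:ℝ)+1/2), fext κ T u)
          = (∫ u in (-T)..T, fext κ T u) + ∫ u in T..((P:ℝ)+1/2), fext κ T u :=
        (intervalIntegral.integral_add_adjacent_intervals
          (hfc.intervalIntegrable _ _) (hfc.intervalIntegrable _ _)).symm
      rw [e1, e2, hzero1, hzero2]
      ring
    have hmain := fext_integral hκpos hT0
    rw [show 2*κ + 1 = (k:ℝ) + 1 from by rw [hκdef]; ring] at hmain
    -- the error term
    set p : ℤ → Prop := fun n => |(n:ℝ)| ≤ T - (2*(m:ℝ)+3) with hpdef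
    have hfloor1 : ((⌊T⌋:ℤ):ℝ) ≤ T := Int.floor_le T
    have hfloor2 : T - 1 < ((⌊T⌋:ℤ):ℝ) := Int.sub_one_lt_floor T
    -- interior pointwise bound
    have hInterior : ∀ n ∈ S.filter p, |Dop^[m] (fext κ T) n|
        ≤ Cg * T^κ * (T - |(n:ℝ)| - (m:ℝ)/2) ^ (κ - 2*(m:ℝ)) := by
      intro n hn
      rw [Finset.mem_filter] at hn
      have hnp : |(n:ℝ)| ≤ T - (2*(m:ℝ)+3) := hn.2
      have hm0 : (0:ℝ) ≤ (m:ℝ) := Nat.cast_nonneg m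
      have hcongr : Dop^[m] (fext κ T) (n:ℝ) = Dop^[m] (phifam κ T 0) (n:ℝ) := by
        apply Dop_iter_congr
        intro y hy
        apply fext_eq_phifam hT0
        have h2 := abs_sub_abs_le_abs_sub y (n:ℝ)
        linarith
      rw [hcongr]
      have hd0 : (0:ℝ) < T - |(n:ℝ)| - (m:ℝ)/2 := by linarith [abs_nonneg (n:ℝ)]
      apply Dop_iter_bound m T (phifam κ T) (fun i y hy => phifam_deriv hT0 hy) 0 (n:ℝ) _
        (by positivity) (by linarith) ?_
      intro y hy
      have hyb : |y| ≤ |(n:ℝ)| + (m:ℝ)/2 := by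
        have h2 := abs_sub_abs_le_abs_sub y (n:ℝ)
        linarith
      have hy1 : |y| ≤ T - 1 := by linarith
      rw [show (0 + 2*m : ℕ) = 2*m from by omega]
      have hcast2m : ((2*m:ℕ):ℝ) = 2*(m:ℝ) := by push_cast; ring
      have hb := phifam_bound hT hCg0 hCg (by rw [hcast2m]; linarith) hy1
      calc |phifam κ T (2*m) y| ≤ Cg * T^κ * (T - |y|)^(κ - ((2*m:ℕ):ℝ)) := hb
      _ ≤ Cg * T^κ * (T - |(n:ℝ)| - (m:ℝ)/2) ^ (κ - 2*(m:ℝ)) := by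
          rw [hcast2m]
          apply mul_le_mul_of_nonneg_left _ (by positivity)
          exact Real.rpow_le_rpow_of_nonpos hd0 (by linarith) (by linarith)
    -- interior summation
    set Q' : ℤ := ⌊T⌋ - (2*(m:ℤ) + 3) with hQ'def
    have hQ'cast : ((Q':ℤ):ℝ) = ((⌊T⌋:ℤ):ℝ) - (2*(m:ℝ)+3) := by
      rw [hQ'def]; push_cast; ring
    have hterm : ∀ n : ℤ, n ∈ S.filter p →
        (T - |(n:ℝ)| - (m:ℝ)/2) ^ (κ - 2*(m:ℝ)) ≤ (((Q' - |n|).toNat : ℝ) + 1) ^ (-2:ℝ) := by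
      intro n hn
      rw [Finset.mem_filter] at hn
      have hnp : |(n:ℝ)| ≤ T - (2*(m:ℝ)+3) := hn.2
      have hm0 : (0:ℝ) ≤ (m:ℝ) := Nat.cast_nonneg m
      have hQn : |n| ≤ Q' := by
        rw [hQ'def]
        have : |n| + (2*(m:ℤ)+3) ≤ ⌊T⌋ := by
          rw [Int.le_floor]
          push_cast
          rw [← Int.cast_abs]
          push_cast
          linarith
        omega
      have hcast : ((Q' - |n|).toNat : ℝ) = ((Q':ℤ):ℝ) - |(n:ℝ)| := by
        have h1 : ((Q' - |n|).toNat : ℤ) = Q' - |n| := Int.toNat_of_nonneg (by omega)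
        have h2 := congrArg (fun z : ℤ => (z:ℝ)) h1
        push_cast at h2
        rw [h2]
      have hd1 : (0:ℝ) < ((Q' - |n|).toNat : ℝ) + 1 := by positivity
      have hble : ((Q' - |n|).toNat : ℝ) + 1 ≤ T - |(n:ℝ)| - (m:ℝ)/2 := by
        rw [hcast, hQ'cast]
        linarith
      calc (T - |(n:ℝ)| - (m:ℝ)/2) ^ (κ - 2*(m:ℝ))
          ≤ (T - |(n:ℝ)| - (m:ℝ)/2) ^ (-2:ℝ) :=
            Real.rpow_le_rpow_of_exponent_le (by linarith) hκm2
      _ ≤ (((Q' - |n|).toNat : ℝ) + 1) ^ (-2:ℝ) :=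
            Real.rpow_le_rpow_of_nonpos hd1 hble (by norm_num)
    have hsum_half : ∀ (W : Finset ℤ), (∀ a ∈ W, ∀ b ∈ W, |a| = |b| → a = b) →
        (∀ n ∈ W, |n| ≤ Q') →
        ∑ n ∈ W, (((Q' - |n|).toNat : ℝ) + 1) ^ (-2:ℝ) ≤ Z := by
      intro W hinj hle
      have himg := Finset.sum_image (s := W) (g := fun n : ℤ => (Q' - |n|).toNat)
        (f := fun s : ℕ => ((s:ℝ)+1)^(-2:ℝ)) ?_
      · rw [← himg]
        exact Summable.sum_le_tsum _ (fun i _ => rpow_nonneg (by positivity) _) hZsum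
      · intro a ha b hb hab
        apply hinj a ha b hb
        have hab' : (Q' - |a|).toNat = (Q' - |b|).toNat := hab
        have h1 := hle a ha
        have h2 := hle b hb
        have h3 : (0:ℤ) ≤ |a| := abs_nonneg a
        have h4 : (0:ℤ) ≤ |b| := abs_nonneg b
        omega
    have hwsum : ∑ n ∈ S.filter p, (((Q' - |n|).toNat : ℝ) + 1) ^ (-2:ℝ) ≤ 2*Z := by
      have hsplit := Finset.sum_filter_add_sum_filter_not (S.filter p) (fun n : ℤ => 0 ≤ n)
        (fun n => (((Q' - |n|).toNat : ℝ) + 1) ^ (-2:ℝ))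
      have hA : ∑ n ∈ (S.filter p).filter (fun n : ℤ => 0 ≤ n),
          (((Q' - |n|).toNat : ℝ) + 1) ^ (-2:ℝ) ≤ Z := by
        apply hsum_half
        · intro a ha b hb hab
          rw [Finset.mem_filter] at ha hb
          rw [abs_of_nonneg ha.2, abs_of_nonneg hb.2] at hab
          exact hab
        · intro n hn
          rw [Finset.mem_filter] at hn
          have hnp : |(n:ℝ)| ≤ T - (2*(m:ℝ)+3) := by
            have := hn.1
            rw [Finset.mem_filter] at this
            exact this.2
          rw [hQ'def]
          have : |n| + (2*(m:ℤ)+3) ≤ ⌊T⌋ := by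
            rw [Int.le_floor]
            push_cast
            rw [← Int.cast_abs]
            push_cast
            linarith
          omega
      have hB : ∑ n ∈ (S.filter p).filter (fun n : ℤ => ¬ 0 ≤ n),
          (((Q' - |n|).toNat : ℝ) + 1) ^ (-2:ℝ) ≤ Z := by
        apply hsum_half
        · intro a ha b hb hab
          rw [Finset.mem_filter] at ha hb
          rw [abs_of_neg (by omega : a < 0), abs_of_neg (by omega : b < 0)] at hab
          omega
        · intro n hn
          rw [Finset.mem_filter] at hn
          have hnp : |(n:ℝ)| ≤ T - (2*(m:ℝ)+3) := by
            have := hn.1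
            rw [Finset.mem_filter] at this
            exact this.2
          rw [hQ'def]
          have : |n| + (2*(m:ℤ)+3) ≤ ⌊T⌋ := by
            rw [Int.le_floor]
            push_cast
            rw [← Int.cast_abs]
            push_cast
            linarith
          omega
      linarith [hsplit, hA, hB]
    have hIntSum : ∑ n ∈ S.filter p, |Dop^[m] (fext κ T) n| ≤ Cg * T^κ * (2*Z) := by
      calc ∑ n ∈ S.filter p, |Dop^[m] (fext κ T) n|
          ≤ ∑ n ∈ S.filter p, Cg * T^κ * (((Q' - |n|).toNat : ℝ) + 1) ^ (-2:ℝ) := by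
            apply Finset.sum_le_sum
            intro n hn
            calc |Dop^[m] (fext κ T) n|
                ≤ Cg * T^κ * (T - |(n:ℝ)| - (m:ℝ)/2) ^ (κ - 2*(m:ℝ)) := hInterior n hn
            _ ≤ Cg * T^κ * (((Q' - |n|).toNat : ℝ) + 1) ^ (-2:ℝ) :=
                mul_le_mul_of_nonneg_left (hterm n hn) (by positivity)
      _ = Cg * T^κ * ∑ n ∈ S.filter p, (((Q' - |n|).toNat : ℝ) + 1) ^ (-2:ℝ) := by
            rw [Finset.mul_sum]
      _ ≤ Cg * T^κ * (2*Z) := mul_le_mul_of_nonneg_left hwsum (by positivity)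
    -- edge bound
    have hEdgePt : ∀ n ∈ S.filter (fun n => ¬ p n), |Dop^[m] (fext κ T) n| ≤ Bedge * T^κ := by
      intro n hn
      rw [Finset.mem_filter] at hn
      have hnp : T - (2*(m:ℝ)+3) < |(n:ℝ)| := not_le.mp hn.2
      have hm0 : (0:ℝ) ≤ (m:ℝ) := Nat.cast_nonneg m
      have hB' : |Dop^[m] (fext κ T) n| ≤ 2^m * ((6*(m:ℝ)+6) * T) ^ κ := by
        apply Dop_iter_triv m _ hfc _ _ (by positivity)
        intro y hy
        rw [abs_of_nonneg (fext_nonneg _ _ _)]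
        have hyl : T - (3*(m:ℝ)+3) ≤ |y| := by
          have h2 := abs_sub_abs_le_abs_sub (n:ℝ) y
          rw [abs_sub_comm] at h2
          linarith
        show (max (T^2 - y^2) 0) ^ κ ≤ ((6*(m:ℝ)+6) * T) ^ κ
        have hmaxle : max (T^2 - y^2) 0 ≤ (6*(m:ℝ)+6) * T := by
          apply max_le _ (by positivity)
          have h1 : (0:ℝ) ≤ T - (3*(m:ℝ)+3) := by linarith
          have h2 : (T - (3*(m:ℝ)+3))^2 ≤ y^2 := by
            rw [← sq_abs y]
            exact pow_le_pow_left₀ h1 hyl 2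
          have h3 : (T - (3*(m:ℝ)+3))^2 = T^2 - (6*(m:ℝ)+6)*T + (3*(m:ℝ)+3)^2 := by ring
          have h4 : (0:ℝ) ≤ (3*(m:ℝ)+3)^2 := sq_nonneg _
          linarith
        exact Real.rpow_le_rpow (le_max_right _ _) hmaxle hκpos.le
      calc |Dop^[m] (fext κ T) n| ≤ 2^m * ((6*(m:ℝ)+6) * T)^κ := hB'
      _ = Bedge * T^κ := by
          rw [hBedgedef, Real.mul_rpow (by positivity) hT0.le]
          ring
    -- edge cardinality
    set Q : ℤ := ⌊T⌋ - (2*(m:ℤ) + 4) with hQdef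
    have hQcast : ((Q:ℤ):ℝ) = ((⌊T⌋:ℤ):ℝ) - (2*(m:ℝ)+4) := by rw [hQdef]; push_cast; ring
    have hQ0 : (0:ℤ) ≤ Q := by
      rw [hQdef]
      have : (2*(m:ℤ)+4) ≤ ⌊T⌋ := by
        rw [Int.le_floor]
        push_cast
        linarith
      omega
    have hQP : Q ≤ (P:ℤ) := by
      have h1 : ((Q:ℤ):ℝ) ≤ ((P:ℤ):ℝ) := by
        rw [hQcast]
        push_cast
        linarith
      exact_mod_cast h1
    have hsubset : S.filter (fun n => ¬ p n) ⊆ S \ Finset.Icc (-Q) Q := by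
      intro n hn
      rw [Finset.mem_filter] at hn
      rw [Finset.mem_sdiff]
      refine ⟨hn.1, ?_⟩
      intro hmem
      rw [Finset.mem_Icc] at hmem
      apply hn.2
      show |(n:ℝ)| ≤ T - (2*(m:ℝ)+3)
      have h1 : |n| ≤ Q := by rw [abs_le]; exact hmem
      have h2 : |(n:ℝ)| ≤ ((Q:ℤ):ℝ) := by
        rw [← Int.cast_abs]
        exact_mod_cast h1
      rw [hQcast] at h2
      linarith
    have hPQ : (P:ℤ) - Q ≤ 4*(m:ℤ) + 10 := by
      have h1 : ((P:ℤ):ℝ) - ((Q:ℤ):ℝ) < 4*(m:ℝ) + 11 := by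
        rw [hQcast]
        push_cast
        linarith
      have h2 : (P:ℤ) - Q < 4*(m:ℤ) + 11 := by
        have : (((P:ℤ) - Q : ℤ):ℝ) < ((4*(m:ℤ) + 11 : ℤ):ℝ) := by push_cast; push_cast at h1; linarith
        exact_mod_cast this
      omega
    have hcardle : (S.filter (fun n => ¬ p n)).card ≤ 8*m + 20 := by
      have h1 := Finset.card_le_card hsubset
      have h2 : (S \ Finset.Icc (-Q) Q).card = S.card - (Finset.Icc (-Q) Q).card :=
        Finset.card_sdiff_of_subset (by
          intro x hx
          rw [Finset.mem_Icc] at hx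
          rw [hSdef, Finset.mem_Icc]
          omega)
      have h3 : S.card = 2*P+1 := by rw [hSdef, Int.card_Icc]; omega
      have h4 : (Finset.Icc (-Q) Q).card = (2*Q+1).toNat := by rw [Int.card_Icc]; congr 1; ring
      rw [h2, h3, h4] at h1
      omega
    have hEdgeSum : ∑ n ∈ S.filter (fun n => ¬ p n), |Dop^[m] (fext κ T) n|
        ≤ (8*(m:ℝ)+20) * (Bedge * T^κ) := by
      calc ∑ n ∈ S.filter (fun n => ¬ p n), |Dop^[m] (fext κ T) n|
          ≤ (S.filter (fun n => ¬ p n)).card • (Bedge * T^κ) :=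
            Finset.sum_le_card_nsmul _ _ _ hEdgePt
      _ = ((S.filter (fun n => ¬ p n)).card : ℝ) * (Bedge * T^κ) := nsmul_eq_mul _ _
      _ ≤ (8*(m:ℝ)+20) * (Bedge * T^κ) := by
          apply mul_le_mul_of_nonneg_right _ (by positivity)
          have : ((S.filter (fun n => ¬ p n)).card : ℝ) ≤ ((8*m + 20 : ℕ) : ℝ) := by
            exact_mod_cast hcardle
          push_cast at this
          linarith
    have herr : |∑ n ∈ S, Dop^[m] (fext κ T) n| ≤ Cmain * T^κ := by
      calc |∑ n ∈ S, Dop^[m] (fext κ T) n| ≤ ∑ n ∈ S, |Dop^[m] (fext κ T) n| :=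
          Finset.abs_sum_le_sum_abs _ _
      _ = (∑ n ∈ S.filter p, |Dop^[m] (fext κ T) n|)
          + ∑ n ∈ S.filter (fun n => ¬ p n), |Dop^[m] (fext κ T) n| :=
          (Finset.sum_filter_add_sum_filter_not S p _).symm
      _ ≤ Cg * T^κ * (2*Z) + (8*(m:ℝ)+20) * (Bedge * T^κ) := add_le_add hIntSum hEdgeSum
      _ = Cmain * T^κ := by rw [hCmaindef]; ring
    have hfinal : (∑ n ∈ S, fext κ T n) - 2 * T ^ ((k:ℝ)+1) * (∫ t in (0:ℝ)..1, (1-t^2)^κ)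
        = ∑ n ∈ S, Dop^[m] (fext κ T) n := by
      rw [hident, hintP, hmain]
      ring
    rw [hfinal]
    calc |∑ n ∈ S, Dop^[m] (fext κ T) n| ≤ Cmain * T^κ := herr
    _ ≤ (C₀ + Cmain) * T^κ := mul_le_mul_of_nonneg_right (by linarith) hTκ0
end

section
/- For all real T, the sum over integers n with |n| < T of (T² - n²) equals (4/3)T³ - (2{T}² - 2{T} + 1/3)T + ((2/3){T}³ - {T}² + (1/3){T}), where {T} denotes the fractional part of T. -/
open Real

lemma aux_sum_sq (T : ℝ) : ∀ M : ℕ, ∑ n ∈ Finset.Icc (-(M:ℤ)) (M:ℤ), (T^2 - (n:ℝ)^2)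
    = (2*(M:ℝ)+1)*T^2 - ((M:ℝ)*((M:ℝ)+1)*(2*(M:ℝ)+1))/3 := by
  intro M
  induction M with
  | zero => simp
  | succ M ih =>
    have h1 : Finset.Icc (-((M:ℤ)+1)) ((M:ℤ)+1)
        = insert (-((M:ℤ)+1)) (insert ((M:ℤ)+1) (Finset.Icc (-(M:ℤ)) (M:ℤ))) := by
      ext n; simp only [Finset.mem_Icc, Finset.mem_insert]; omega
    have h2 : (-((M:ℤ)+1)) ∉ insert ((M:ℤ)+1) (Finset.Icc (-(M:ℤ)) (M:ℤ)) := by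
      simp only [Finset.mem_insert, Finset.mem_Icc]; omega
    have h3 : ((M:ℤ)+1) ∉ Finset.Icc (-(M:ℤ)) (M:ℤ) := by
      simp only [Finset.mem_Icc]; omega
    push_cast
    rw [h1, Finset.sum_insert h2, Finset.sum_insert h3, ih]
    push_cast
    ring

theorem sum_sq_explicit :
    ∀ T : ℝ, 0 ≤ T →
      (∑' n : ℤ, if |(n:ℝ)| < T then T^2 - (n:ℝ)^2 else 0)
        = (4/3) * T^3 - (2 * Int.fract T ^ 2 - 2 * Int.fract T + 1/3) * T
          + ((2/3) * Int.fract T ^ 3 - Int.fract T ^ 2 + (1/3) * Int.fract T) := by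
  intro T hT
  rcases eq_or_lt_of_le hT with h0 | hT0
  · have : (∑' n : ℤ, if |(n:ℝ)| < T then T^2 - (n:ℝ)^2 else 0) = 0 := by
      have : ∀ n : ℤ, (if |(n:ℝ)| < T then T^2 - (n:ℝ)^2 else 0) = 0 := by
        intro n
        rw [if_neg]
        rw [← h0]
        exact not_lt.2 (abs_nonneg _)
      simp [this]
    rw [this, ← h0]
    simp
  · set m : ℤ := ⌈T⌉ - 1 with hm
    have hm0 : 0 ≤ m := by
      have : 1 ≤ ⌈T⌉ := by exact_mod_cast Int.le_ceil_iff.mpr (by norm_num [hT0])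
      omega
    set M : ℕ := m.toNat with hM
    have hMm : (M : ℤ) = m := Int.toNat_of_nonneg hm0
    have hiff : ∀ n : ℤ, |(n:ℝ)| < T ↔ n ∈ Finset.Icc (-(M:ℤ)) (M:ℤ) := by
      intro n
      have : |(n:ℝ)| = ((|n| : ℤ) : ℝ) := by push_cast; ring
      rw [this, ← Int.lt_ceil, Finset.mem_Icc, hMm]
      constructor
      · intro h; have : |n| ≤ m := by omega
        constructor <;> [skip; skip] <;> cases' abs_le.mp this with h1 h2 <;> omega
      · intro ⟨h1, h2⟩; have : |n| ≤ m := abs_le.mpr ⟨h1, h2⟩; omega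
    have hsum : (∑' n : ℤ, if |(n:ℝ)| < T then T^2 - (n:ℝ)^2 else 0)
        = ∑ n ∈ Finset.Icc (-(M:ℤ)) (M:ℤ), (T^2 - (n:ℝ)^2) := by
      rw [tsum_eq_sum (s := Finset.Icc (-(M:ℤ)) (M:ℤ))]
      · exact Finset.sum_congr rfl fun n hn => if_pos ((hiff n).mpr hn)
      · intro n hn
        exact if_neg fun h => hn ((hiff n).mp h)
    rw [hsum, aux_sum_sq]
    rcases eq_or_lt_of_le (Int.fract_nonneg T) with hf | hf
    · -- T is an integer
      have hfl : (⌊T⌋ : ℝ) = T := by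
        have := Int.fract_add_floor T; rw [← hf] at this; linarith [this]
      have hceil : ⌈T⌉ = ⌊T⌋ := le_antisymm (Int.ceil_le.mpr (le_of_eq hfl.symm))
        (Int.floor_le_ceil T)
      have hMr : (M : ℝ) = T - 1 := by
        have : ((M : ℤ) : ℝ) = ((⌈T⌉ : ℝ) - 1) := by rw [hMm, hm]; push_cast; ring
        rw [hceil, hfl] at this; exact_mod_cast this
    -- substitute
      rw [hMr, ← hf]
      ring
    · -- T is not an integer
      have hfl : ((⌊T⌋:ℤ) : ℝ) = T - Int.fract T := by
        rw [Int.self_sub_fract]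
      have hfr : Int.fract T = T - ⌊T⌋ := (Int.self_sub_floor T).symm
      have hceil : ⌈T⌉ = ⌊T⌋ + 1 := by
        have h1 : ⌈T⌉ ≤ ⌊T⌋ + 1 := by
          apply Int.ceil_le.mpr
          push_cast
          linarith [Int.lt_floor_add_one T]
        have h2 : ⌊T⌋ + 1 ≤ ⌈T⌉ := by
          rw [Int.add_one_le_iff, Int.lt_ceil]; linarith
        omega
      have hMr : (M : ℝ) = T - Int.fract T := by
        have : ((M : ℤ) : ℝ) = ((⌊T⌋:ℤ) : ℝ) := by rw [hMm, hm, hceil]; push_cast; ring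
        rw [hfl] at this; exact_mod_cast this
      rw [hMr]
      ring
end
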